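/- Let G be a torsion-free abelian group (written additively) and F₁ a field in which for every positive integer n and every λ ∈ F₁ the equation x^n = λ has a solution in F₁. Then every symmetric two-cycle f : G×G → F₁ˣ is a two-boundary: there exists η : G → F₁ˣ with f(g,h) = η(g+h)η(g)⁻¹η(h)⁻¹ for all g,h ∈ G. -/

import Mathlib

/-! Auxiliary material: the extension group built from a (normalized) symmetric 2-cocycle. -/

universe u v

/-- The underlying type of the extension of `G` by `F₁ˣ` determined by a 2-cocycle. -/
structure TwoBdryExt (G : Type u) (F₁ : Type v) [Field F₁] where
  g : G
  a : F₁ˣ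

namespace TwoBdryExt

variable {G : Type u} [AddCommGroup G] {F₁ : Type v} [Field F₁]

/-- Addition on the extension twisted by the cocycle `f`. -/
def eadd (f : G → G → F₁ˣ) (x y : TwoBdryExt G F₁) : TwoBdryExt G F₁ :=
  ⟨x.g + y.g, x.a * y.a * f x.g y.g⟩

/-- Negation on the extension twisted by the cocycle `f`. -/
def eneg (f : G → G → F₁ˣ) (x : TwoBdryExt G F₁) : TwoBdryExt G F₁ :=
  ⟨-x.g, (x.a * f x.g (-x.g))⁻¹⟩

/-- The abelian group structure on the extension, from a normalized symmetric cocycle. -/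
def extGroup (f : G → G → F₁ˣ)
    (hc : ∀ g₁ g₂ g₃ : G, f g₁ g₂ * f (g₁ + g₂) g₃ = f g₁ (g₂ + g₃) * f g₂ g₃)
    (hs : ∀ g₁ g₂ : G, f g₁ g₂ = f g₂ g₁)
    (h0 : ∀ g : G, f 0 g = 1) (h0' : ∀ g : G, f g 0 = 1) :
    AddCommGroup (TwoBdryExt G F₁) :=
  letI : Add (TwoBdryExt G F₁) := ⟨eadd f⟩
  letI : Zero (TwoBdryExt G F₁) := ⟨⟨0, 1⟩⟩
  letI : Neg (TwoBdryExt G F₁) := ⟨eneg f⟩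
  { AddGroup.ofLeftAxioms
      (by
        intro x y z
        show eadd f (eadd f x y) z = eadd f x (eadd f y z)
        have key := congrArg Units.val (hc x.g y.g z.g)
        simp only [Units.val_mul] at key
        simp only [eadd, mk.injEq]
        refine ⟨add_assoc _ _ _, Units.ext ?_⟩
        simp only [Units.val_mul]
        linear_combination (x.a : F₁) * (y.a : F₁) * (z.a : F₁) * key)
      (by
        intro x
        show eadd f ⟨0, 1⟩ x = x
        cases x with
        | mk g a => simp [eadd, h0])
      (by
        intro x
        show eadd f (eneg f x) x = (⟨0, 1⟩ : TwoBdryExt G F₁)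
        simp only [eadd, eneg, mk.injEq]
        refine ⟨neg_add_cancel _, ?_⟩
        rw [hs (-x.g) x.g]
        group) with
    add_comm := by
      intro x y
      show eadd f x y = eadd f y x
      simp only [eadd, mk.injEq]
      exact ⟨add_comm _ _, by rw [hs x.g y.g, mul_comm x.a y.a]⟩ }

end TwoBdryExt

/-- Main auxiliary lemma, with named universes so we can use `ULift`. -/
theorem twoBoundary_aux {G : Type u} [AddCommGroup G] {F₁ : Type v} [Field F₁]
    (hroots : ∀ (n : ℕ), 0 < n → ∀ lam : F₁, ∃ x : F₁, x ^ n = lam)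
    (f : G → G → F₁ˣ)
    (hcocycle : ∀ g₁ g₂ g₃ : G, f g₁ g₂ * f (g₁ + g₂) g₃ = f g₁ (g₂ + g₃) * f g₂ g₃)
    (hsymm : ∀ g₁ g₂ : G, f g₁ g₂ = f g₂ g₁) :
    ∃ η : G → F₁ˣ, ∀ g h : G, f g h = η (g + h) * (η g)⁻¹ * (η h)⁻¹ := by
  classical
  -- Step 0: divisibility of F₁ˣ
  have hsurj : ∀ {n : ℕ}, n ≠ 0 → Function.Surjective (fun a : F₁ˣ => a ^ n) := by
    intro n hn u
    obtain ⟨x, hx⟩ := hroots n (Nat.pos_of_ne_zero hn) (u : F₁)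
    have hx0 : x ≠ 0 := by
      intro h
      rw [h, zero_pow hn] at hx
      exact u.ne_zero hx.symm
    refine ⟨Units.mk0 x hx0, Units.ext ?_⟩
    simpa using hx
  letI : RootableBy F₁ˣ ℕ := rootableByOfPowLeftSurj _ _ hsurj
  letI : RootableBy F₁ˣ ℤ := Group.rootableByIntOfRootableByNat _
  letI : DivisibleBy (Additive F₁ˣ) ℤ :=
    { div := fun a n => Additive.ofMul (RootableBy.root a.toMul n)
      div_zero := fun a => by
        simp [RootableBy.root_zero]
      div_cancel := fun {n} a hn => by
        apply Additive.toMul.injective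
        rw [toMul_zsmul]
        exact RootableBy.root_cancel _ hn }
  have instInj : Module.Injective ℤ (Additive F₁ˣ) :=
    Module.Baer.injective (Module.Baer.of_divisible _)
  have instInj' : Module.Injective ℤ (ULift.{u} (Additive F₁ˣ)) :=
    Module.ulift_injective_of_injective _ instInj
  -- Step 1: normalize the cocycle
  set c : F₁ˣ := f 0 0 with hc_def
  have hconst : ∀ g : G, f 0 g = c := by
    intro g
    have h1 := hcocycle 0 0 g
    rw [zero_add, zero_add] at h1
    exact (mul_right_cancel h1).symm
  set f' : G → G → F₁ˣ := fun g h => f g h * c⁻¹ with hf'_def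
  have hc' : ∀ g₁ g₂ g₃ : G, f' g₁ g₂ * f' (g₁ + g₂) g₃ = f' g₁ (g₂ + g₃) * f' g₂ g₃ := by
    intro g₁ g₂ g₃
    have h1 := hcocycle g₁ g₂ g₃
    simp only [hf'_def]
    rw [mul_mul_mul_comm, mul_mul_mul_comm (f g₁ (g₂ + g₃)), h1]
  have hs' : ∀ g₁ g₂ : G, f' g₁ g₂ = f' g₂ g₁ := by
    intro g₁ g₂; simp only [hf'_def, hsymm g₁ g₂]
  have h0 : ∀ g : G, f' 0 g = 1 := by
    intro g; simp [hf'_def, hconst g]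
  have h0' : ∀ g : G, f' g 0 = 1 := by
    intro g; rw [hs']; exact h0 g
  -- Step 2: the extension group
  letI instE : AddCommGroup (TwoBdryExt G F₁) := TwoBdryExt.extGroup f' hc' hs' h0 h0'
  have add_def : ∀ x y : TwoBdryExt G F₁, x + y = TwoBdryExt.eadd f' x y := fun _ _ => rfl
  have zero_def : (0 : TwoBdryExt G F₁) = ⟨0, 1⟩ := rfl
  -- the inclusion of F₁ˣ
  let i : ULift.{u} (Additive F₁ˣ) →+ TwoBdryExt G F₁ :=
    { toFun := fun q => ⟨0, q.down.toMul⟩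
      map_zero' := rfl
      map_add' := by
        intro q₁ q₂
        rw [add_def]
        simp only [TwoBdryExt.eadd, TwoBdryExt.mk.injEq]
        exact ⟨(add_zero _).symm, by simp [h0, toMul_add]⟩ }
  have hi_inj : Function.Injective i := by
    intro q₁ q₂ hq
    have h1 : (⟨0, q₁.down.toMul⟩ : TwoBdryExt G F₁) = ⟨0, q₂.down.toMul⟩ := hq
    have h2 : q₁.down.toMul = q₂.down.toMul := by injection h1
    cases q₁; cases q₂
    exact congrArg ULift.up (Additive.toMul.injective h2)
  obtain ⟨r, hr⟩ := instInj'.out i.toIntLinearMap hi_inj LinearMap.id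
  -- Step 3: read off η
  set R : G → F₁ˣ := fun g => (r ⟨g, 1⟩).down.toMul with hR_def
  have keyR : ∀ g h : G, R g * R h = R (g + h) * f' g h := by
    intro g h
    have hiq : i (ULift.up (Additive.ofMul (f' g h))) = (⟨0, f' g h⟩ : TwoBdryExt G F₁) := rfl
    have hsum : (⟨g, 1⟩ + ⟨h, 1⟩ : TwoBdryExt G F₁)
        = (⟨g + h, 1⟩ : TwoBdryExt G F₁) + i (ULift.up (Additive.ofMul (f' g h))) := by
      rw [hiq, add_def, add_def]
      simp only [TwoBdryExt.eadd, TwoBdryExt.mk.injEq]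
      exact ⟨by rw [add_zero], by rw [h0', one_mul, one_mul, mul_one]⟩
    have h1 := congrArg r hsum
    rw [map_add, map_add] at h1
    have h3 : r (i (ULift.up (Additive.ofMul (f' g h)))) = ULift.up (Additive.ofMul (f' g h)) :=
      hr _
    rw [h3] at h1
    have h5 := congrArg (fun q : ULift.{u} (Additive F₁ˣ) => q.down.toMul) h1
    simp only [ULift.add_down, toMul_add] at h5
    simpa [hR_def] using h5
  refine ⟨fun g => (R g)⁻¹ * c⁻¹, fun g h => ?_⟩
  have hfgh : f g h = f' g h * c := by simp [hf'_def]
  have hkv := congrArg Units.val (keyR g h)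
  simp only [Units.val_mul] at hkv
  refine Units.ext ?_
  simp only [hfgh, Units.val_mul, Units.val_inv_eq_inv_val]
  field_simp
  linear_combination (-1 : F₁) * hkv

theorem symmetric_twoCycle_torsionFree_perfect_is_twoBoundary
    {G : Type*} [AddCommGroup G]
    (htf : ∀ g : G, ∀ n : ℕ, 0 < n → n • g = 0 → g = 0)
    {F₁ : Type*} [Field F₁]
    (hroots : ∀ (n : ℕ), 0 < n → ∀ lam : F₁, ∃ x : F₁, x ^ n = lam)
    (f : G → G → F₁ˣ)
    (hcocycle : ∀ g₁ g₂ g₃ : G, f g₁ g₂ * f (g₁ + g₂) g₃ = f g₁ (g₂ + g₃) * f g₂ g₃)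
    (hsymm : ∀ g₁ g₂ : G, f g₁ g₂ = f g₂ g₁) :
    ∃ η : G → F₁ˣ, ∀ g h : G, f g h = η (g + h) * (η g)⁻¹ * (η h)⁻¹ :=
  twoBoundary_aux hroots f hcocycle hsymm
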